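/- Let n ≥ 1 and p ∈ ℝ with p ≠ 0. For every x ∈ ℝⁿ with xᵢ > 0 for all i and Σᵢ xᵢ = 1, the diversity-weighted portfolio weights satisfy the functional-generation formula: for each i, xᵢᵖ / Σⱼ xⱼᵖ = (Dᵢ log G_p(x) + 1 − Σⱼ xⱼ Dⱼ log G_p(x)) · xᵢ, where G_p(x) := (Σᵢ xᵢᵖ)^{1/p} and Dᵢ denotes the partial derivative with respect to the i-th variable. -/

import Mathlib

open Finset Real

/-- the diversity function `G_p` generates the diversity-weighted
portfolio with parameter `p ≠ 0` via Fernholz's functional-generation formula. -/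
theorem diversity_functionally_generated
    (n : ℕ) (hn : 1 ≤ n) (p : ℝ) (hp : p ≠ 0)
    (x : Fin n → ℝ) (hx : ∀ i, 0 < x i) (hsum : ∑ i, x i = 1)
    (Gp : (Fin n → ℝ) → ℝ) (hGp : Gp = fun y => (∑ j, y j ^ p) ^ (1 / p))
    (i : Fin n) :
    x i ^ p / ∑ j, x j ^ p =
      (fderiv ℝ (fun y => Real.log (Gp y)) x (Pi.single i 1) + 1 -
        ∑ j, x j * fderiv ℝ (fun y => Real.log (Gp y)) x (Pi.single j 1)) * x i := by
  set S : ℝ := ∑ j, x j ^ p with hS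
  have hSpos : 0 < S := Finset.sum_pos (fun j _ => Real.rpow_pos_of_pos (hx j) p)
    (Finset.univ_nonempty_iff.2 (Fin.pos_iff_nonempty.1 hn))
  -- derivative of the inner sum
  have hsumF : HasFDerivAt (fun y : Fin n → ℝ => ∑ j, y j ^ p)
      (∑ j, (p * x j ^ (p - 1)) • (ContinuousLinearMap.proj j :
        (Fin n → ℝ) →L[ℝ] ℝ)) x := by
    apply HasFDerivAt.fun_sum
    intro j _
    exact (Real.hasDerivAt_rpow_const (Or.inl (hx j).ne')).comp_hasFDerivAt x
      (hasFDerivAt_apply (𝕜 := ℝ) (F' := fun _ : Fin n => ℝ) j x)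
  have hlog : HasFDerivAt (fun y : Fin n → ℝ => (1 / p) * Real.log (∑ j, y j ^ p))
      ((1 / p) • (S⁻¹ • (∑ j, (p * x j ^ (p - 1)) • (ContinuousLinearMap.proj j :
        (Fin n → ℝ) →L[ℝ] ℝ)))) x := by
    exact (((Real.hasDerivAt_log hSpos.ne').comp_hasFDerivAt x hsumF).const_smul (1/p) : _)
  -- the two functions agree near x
  have hpos : ∀ᶠ y : Fin n → ℝ in nhds x, ∀ j, 0 < y j := by
    refine Filter.eventually_all.2 fun j => ((continuous_apply j).tendsto x).eventually (lt_mem_nhds (hx j))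
  have heq : (fun y : Fin n → ℝ => Real.log (Gp y)) =ᶠ[nhds x]
      (fun y : Fin n → ℝ => (1 / p) * Real.log (∑ j, y j ^ p)) := by
    filter_upwards [hpos] with y hy
    have hposS : 0 < ∑ j, y j ^ p := Finset.sum_pos
      (fun j _ => Real.rpow_pos_of_pos (hy j) p)
      (Finset.univ_nonempty_iff.2 (Fin.pos_iff_nonempty.1 hn))
    rw [hGp]
    simp only
    rw [Real.log_rpow hposS]
  have hfd : fderiv ℝ (fun y => Real.log (Gp y)) x =
      (1 / p) • (S⁻¹ • (∑ j, (p * x j ^ (p - 1)) • (ContinuousLinearMap.proj j :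
        (Fin n → ℝ) →L[ℝ] ℝ))) := by
    rw [heq.fderiv_eq, hlog.fderiv]
  have hev : ∀ k : Fin n, fderiv ℝ (fun y => Real.log (Gp y)) x (Pi.single k 1)
      = x k ^ (p - 1) / S := by
    intro k
    rw [hfd]
    simp only [ContinuousLinearMap.smul_apply, ContinuousLinearMap.sum_apply,
      ContinuousLinearMap.proj_apply, smul_eq_mul, Pi.single_apply]
    rw [Finset.sum_eq_single k]
    · simp [div_eq_mul_inv]
      ring_nf
      rw [mul_inv_cancel₀ hp, one_mul]
    · intro b _ hb
      simp [hb]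
    · simp
  have hmul : ∀ k : Fin n, x k * x k ^ (p - 1) = x k ^ p := by
    intro k
    rw [← Real.rpow_one_add' (hx k).le (by intro h; apply hp; linarith)]
    ring_nf
  have hsum2 : ∑ j, x j * (x j ^ (p - 1) / S) = 1 := by
    have : ∑ j, x j * (x j ^ (p - 1) / S) = (∑ j, x j ^ p) / S := by
      rw [Finset.sum_div]
      exact Finset.sum_congr rfl fun j _ => by rw [← hmul j]; ring
    rw [this, ← hS, div_self hSpos.ne']
  simp only [hev, hsum2]
  rw [show x i ^ (p - 1) / S + 1 - 1 = x i ^ (p - 1) / S by ring]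
  rw [div_mul_eq_mul_div, mul_comm, hmul i]
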